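/- Let q be an n×n unitary matrix, let H = fromBlocks(0, q, q†, 0), and let T = fromBlocks(0, 1ₙ, 1ₙ, 0) and C = fromBlocks(0, −i·1ₙ, i·1ₙ, 0). Then the PT symmetry condition T·conj(H)·T† = H holds if and only if q is symmetric, i.e. qᵀ = q; and moreover, if qᵀ = q then the PC symmetry condition C·conj(H)·C† = −H also holds. -/
import Mathlib


open Matrix

/-- Entrywise complex conjugation of a matrix. -/
def mconj {m n : Type*} (M : Matrix m n ℂ) : Matrix m n ℂ :=
  M.map (starRingEnd ℂ)

/-- For `H = fromBlocks 0 q qᴴ 0` with `q` unitary, and the class-CI symmetry operators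
`T = σ_x ⊗ 1` and `C = σ_y ⊗ 1`, PT symmetry `T·conj(H)·T† = H` holds iff `qᵀ = q`;
and if `qᵀ = q` then also the PC symmetry `C·conj(H)·C† = −H` holds. -/
theorem CI_symmetry_iff_symmetric_q {n : ℕ}
    (q : Matrix (Fin n) (Fin n) ℂ)
    (hq : q * qᴴ = 1) (hq' : qᴴ * q = 1)
    (H T C : Matrix (Fin n ⊕ Fin n) (Fin n ⊕ Fin n) ℂ)
    (hHdef : H = fromBlocks 0 q qᴴ 0)
    (hTdef : T = fromBlocks 0 (1 : Matrix (Fin n) (Fin n) ℂ) 1 0)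
    (hCdef : C = fromBlocks 0 (-(Complex.I • (1 : Matrix (Fin n) (Fin n) ℂ)))
        (Complex.I • (1 : Matrix (Fin n) (Fin n) ℂ)) 0) :
    (T * mconj H * Tᴴ = H ↔ qᵀ = q) ∧
      (qᵀ = q → C * mconj H * Cᴴ = -H) := by
  subst hHdef hTdef hCdef
  have hm : mconj (fromBlocks 0 q qᴴ 0) = fromBlocks 0 (mconj q) qᵀ 0 := by
    ext (i | i) (j | j) <;>
      simp [mconj, fromBlocks, conjTranspose_apply]
  have hconj : mconj q = qᴴ ↔ qᵀ = q := by
    constructor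
    · intro h
      have := congrArg Matrix.transpose h
      ext i j
      have := congrFun (congrFun this j) i
      simpa [mconj, conjTranspose_apply, transpose_apply] using
        (congrArg (starRingEnd ℂ) this).symm
    · intro h
      ext i j
      have := congrFun (congrFun h j) i
      simp only [transpose_apply] at this
      simp [mconj, conjTranspose_apply, this]
  constructor
  · rw [hm]
    have hTprod : fromBlocks 0 (1 : Matrix (Fin n) (Fin n) ℂ) 1 0 *
        fromBlocks 0 (mconj q) qᵀ 0 *
        (fromBlocks 0 (1 : Matrix (Fin n) (Fin n) ℂ) 1 0)ᴴ =
        fromBlocks 0 qᵀ (mconj q) 0 := by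
      simp [fromBlocks_conjTranspose, fromBlocks_multiply]
    rw [hTprod]
    constructor
    · intro h
      ext i j
      simpa [fromBlocks] using congrFun (congrFun h (Sum.inl i)) (Sum.inr j)
    · intro h
      rw [h, hconj.mpr h]
  · intro h
    rw [hm, hconj.mpr h, h]
    have hC : (fromBlocks 0 (-(Complex.I • (1 : Matrix (Fin n) (Fin n) ℂ)))
        (Complex.I • (1 : Matrix (Fin n) (Fin n) ℂ)) 0)ᴴ =
        fromBlocks 0 (-(Complex.I • (1 : Matrix (Fin n) (Fin n) ℂ)))
        (Complex.I • (1 : Matrix (Fin n) (Fin n) ℂ)) 0 := by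
      ext (i | i) (j | j) <;>
        simp [conjTranspose_apply, fromBlocks, one_apply] <;> aesop
    rw [fromBlocks_conjTranspose]
    ext (i | i) (j | j) <;>
      simp [fromBlocks_multiply, fromBlocks, Matrix.mul_apply, one_apply,
        Finset.sum_ite_eq, Complex.ext_iff] <;> ring_nf <;>
      simp [Complex.I_sq]
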